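/- Let K be a field of characteristic zero, a ∈ K, and b, m ≥ 1 natural numbers. Let y be a formal power series over K in X with constant coefficient 0 satisfying y = X·(1 + a·y^b). Then for every n ≥ 1: if n ≥ m and b divides n−m, then n · (coefficient of X^n in y^m) = m · C(n, (n−m)/b) · a^((n−m)/b); otherwise the coefficient of X^n in y^m is 0. -/

import Mathlib

open PowerSeries Finset

/-- The key natural-number combinatorial identity (Vandermonde + absorption). -/
lemma aux_nat_sum (m q b : ℕ) (hm : 1 ≤ m) (hq : 1 ≤ q) :
    (∑ k ∈ range (m + 1),
        if 1 ≤ k ∧ k ≤ q then k * m.choose k * (b * q).choose (q - k) else 0)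
      = m * (m - 1 + b * q).choose (q - 1) := by
  have h1 : (∑ k ∈ range (m + 1),
        if 1 ≤ k ∧ k ≤ q then k * m.choose k * (b * q).choose (q - k) else 0)
      = ∑ k ∈ range (m + q + 1),
        if 1 ≤ k ∧ k ≤ q then k * m.choose k * (b * q).choose (q - k) else 0 := by
    apply Finset.sum_subset
    · exact Finset.range_subset_range.2 (by omega)
    · intro k _ hk
      have : m < k := by simpa using hk
      rw [Nat.choose_eq_zero_of_lt this]
      simp
  have h2 : (∑ k ∈ range (q + 1),
        if 1 ≤ k ∧ k ≤ q then k * m.choose k * (b * q).choose (q - k) else 0)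
      = ∑ k ∈ range (m + q + 1),
        if 1 ≤ k ∧ k ≤ q then k * m.choose k * (b * q).choose (q - k) else 0 := by
    apply Finset.sum_subset
    · exact Finset.range_subset_range.2 (by omega)
    · intro k _ hk
      have : q < k := by simpa using hk
      rw [if_neg (by omega)]
  rw [h1, ← h2]
  rw [Finset.sum_range_succ' (fun k => if 1 ≤ k ∧ k ≤ q then
      k * m.choose k * (b * q).choose (q - k) else 0) q]
  have h3 : ∀ j ∈ range q, (if 1 ≤ j + 1 ∧ j + 1 ≤ q then
      (j + 1) * m.choose (j + 1) * (b * q).choose (q - (j + 1)) else 0)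
      = m * (m - 1).choose j * (b * q).choose (q - 1 - j) := by
    intro j hj
    have hjq : j + 1 ≤ q := Finset.mem_range.1 hj
    rw [if_pos ⟨by omega, hjq⟩]
    have h5 := Nat.add_one_mul_choose_eq (m - 1) j
    have hm1 : m - 1 + 1 = m := by omega
    simp only [Nat.succ_eq_add_one, hm1] at h5
    have h4 : (j + 1) * m.choose (j + 1) = m * (m - 1).choose j := by
      rw [mul_comm]; exact h5.symm
    rw [h4]
    congr 2
    omega
  rw [if_neg (by omega), add_zero, Finset.sum_congr rfl h3]
  have h6 : ∀ x ∈ range q, m * (m - 1).choose x * (b * q).choose (q - 1 - x)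
      = m * ((m - 1).choose x * (b * q).choose (q - 1 - x)) := fun x _ => by ring
  rw [Finset.sum_congr rfl h6, ← Finset.mul_sum]
  congr 1
  rw [Nat.add_choose_eq, Finset.Nat.sum_antidiagonal_eq_sum_range_succ_mk,
    show (q - 1).succ = q from by omega]

/-- `q * C(n, q) = n * C(n-1, q-1)` for `n, q ≥ 1`. -/
lemma aux_choose_mul (n q : ℕ) (hn : 1 ≤ n) (hq : 1 ≤ q) :
    n.choose q * q = n * (n - 1).choose (q - 1) := by
  have h5 := Nat.add_one_mul_choose_eq (n - 1) (q - 1)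
  have h1 : n - 1 + 1 = n := by omega
  have h2 : q - 1 + 1 = q := by omega
  simp only [Nat.succ_eq_add_one, h1, h2] at h5
  exact h5.symm

section

variable {K : Type*} [Field K] (a : K) (b : ℕ) (y : PowerSeries K)

/-- The recursion for coefficients coming from `y = X (1 + a y^b)`. -/
lemma aux_coeff_rec (hy : y = X * (1 + C a * y ^ b)) (m n : ℕ) (hn : m ≤ n) :
    coeff n (y ^ m) = ∑ k ∈ range (m + 1),
      (m.choose k : K) * a ^ k * coeff (n - m) (y ^ (b * k)) := by
  have hym : y ^ m = X ^ m * (1 + C a * y ^ b) ^ m := by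
    conv_lhs => rw [hy]
    rw [mul_pow]
  have hnm : n = (n - m) + m := by omega
  conv_lhs => rw [hym, hnm]
  rw [coeff_X_pow_mul]
  rw [add_comm (1 : PowerSeries K), add_pow]
  rw [map_sum]
  refine Finset.sum_congr rfl fun k hk => ?_
  rw [one_pow, mul_one, mul_pow, ← map_pow, ← pow_mul]
  rw [show ((m.choose k : ℕ) : PowerSeries K) = C ((m.choose k : ℕ) : K) by
    rw [map_natCast]]
  rw [coeff_mul_C, coeff_C_mul]
  ring

end

/-- Let `K` be a field of characteristic zero, `a ∈ K`, `b, m ≥ 1`, and let `y` be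
a formal power series over `K` with constant coefficient `0` satisfying
`y = X·(1 + a·y^b)`. Then for every `n ≥ 1`: if `n ≥ m` and `b ∣ n−m`, then
`n · [Xⁿ](y^m) = m · C(n, (n−m)/b) · a^((n−m)/b)`, and otherwise `[Xⁿ](y^m) = 0`. -/
theorem coeff_pow_of_functional_equation {K : Type*} [Field K] [CharZero K]
    (a : K) (b m : ℕ) (hb : 1 ≤ b) (hm : 1 ≤ m)
    (y : PowerSeries K) (hy0 : constantCoeff y = 0)
    (hy : y = X * (1 + C a * y ^ b)) :
    ∀ n : ℕ, 1 ≤ n →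
      if m ≤ n ∧ b ∣ (n - m) then
        (n : K) * coeff n (y ^ m) =
          (m : K) * (Nat.choose n ((n - m) / b) : K) * a ^ ((n - m) / b)
      else coeff n (y ^ m) = 0 := by
  -- constant coefficient facts
  have hc0 : ∀ j : ℕ, 1 ≤ j → coeff 0 (y ^ j) = 0 := by
    intro j hj
    rw [coeff_zero_eq_constantCoeff, map_pow, hy0, zero_pow (by omega)]
  suffices H : ∀ n : ℕ, ∀ m : ℕ, 1 ≤ m → 1 ≤ n →
      if m ≤ n ∧ b ∣ (n - m) then
        (n : K) * coeff n (y ^ m) =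
          (m : K) * (Nat.choose n ((n - m) / b) : K) * a ^ ((n - m) / b)
      else coeff n (y ^ m) = 0 by
    exact fun n hn => H n m hm hn
  intro n
  induction n using Nat.strong_induction_on with
  | _ n IH =>
    intro m hm hn
    by_cases hmn : m ≤ n
    · rw [aux_coeff_rec a b y hy m n hmn]
      by_cases hnm : n = m
      · -- diagonal case : coefficient is 1
        rw [if_pos ⟨hmn, ⟨0, by omega⟩⟩]
        have h00 : n - m = 0 := by omega
        have hsum : (∑ k ∈ range (m + 1),
            (m.choose k : K) * a ^ k * coeff (n - m) (y ^ (b * k))) = 1 := by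
          rw [Finset.sum_eq_single 0]
          · simp [h00]
          · intro k hk hk0
            have h1k : 1 ≤ b * k := Nat.one_le_iff_ne_zero.2
              (Nat.mul_ne_zero (by omega) hk0)
            rw [h00, hc0 (b * k) h1k, mul_zero]
          · simp
        rw [hsum, h00]
        simp [hnm]
      · -- n > m case
        have hmlt : m < n := by omega
        set j := n - m with hj
        have hj1 : 1 ≤ j := by omega
        have hjlt : j < n := by omega
        by_cases hd : b ∣ j
        · obtain ⟨q, hq⟩ := hd
          have hq1 : 1 ≤ q := by
            rcases Nat.eq_zero_or_pos q with h | h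
            · rw [h, mul_zero] at hq; omega
            · exact h
          rw [if_pos ⟨hmn, ⟨q, hq⟩⟩]
          have hdiv : (n - m) / b = q := by
            rw [← hj, hq, Nat.mul_div_cancel_left _ (by omega)]
          rw [hdiv]
          -- key per-term identity
          have hterm : ∀ k ∈ range (m + 1),
              (j : K) * ((m.choose k : K) * a ^ k * coeff j (y ^ (b * k)))
              = ((if 1 ≤ k ∧ k ≤ q then
                  k * m.choose k * (b * q).choose (q - k) * b else 0 : ℕ) : K) * a ^ q := by
            intro k hk
            rcases Nat.eq_zero_or_pos k with rfl | hk1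
            · simp [coeff_one, Nat.one_le_iff_ne_zero.1 hj1]
            · have hbk : 1 ≤ b * k := Nat.one_le_iff_ne_zero.2
                (Nat.mul_ne_zero (by omega) (by omega))
              have := IH j hjlt (b * k) hbk hj1
              by_cases hkq : k ≤ q
              · have hcond : b * k ≤ j ∧ b ∣ (j - b * k) := by
                  constructor
                  · rw [hq]; exact Nat.mul_le_mul (le_refl b) hkq
                  · exact Nat.dvd_sub ⟨q, hq⟩ (dvd_mul_right b k)
                rw [if_pos hcond] at this
                have hdiv2 : (j - b * k) / b = q - k := by
                  rw [hq, ← Nat.mul_sub, Nat.mul_div_cancel_left _ (by omega)]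
                rw [hdiv2] at this
                have this' : (j : K) * coeff j (y ^ (b * k))
                    = ((b * k : ℕ) : K) * (((b * q).choose (q - k) : ℕ) : K)
                      * a ^ (q - k) := by
                  rw [← hq]; exact this
                rw [if_pos ⟨hk1, hkq⟩]
                have haq : a ^ k * a ^ (q - k) = a ^ q := by
                  rw [← pow_add]
                  congr 1
                  omega
                push_cast
                calc (j : K) * ((m.choose k : K) * a ^ k * coeff j (y ^ (b * k)))
                    = (m.choose k : K) * a ^ k * ((j : K) * coeff j (y ^ (b * k))) := by ring
                  _ = (m.choose k : K) * a ^ k *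
                        ((b * k : ℕ) * ((b * q).choose (q - k) : K) * a ^ (q - k)) := by
                        rw [this']
                  _ = (k : K) * (m.choose k : K) * ((b * q).choose (q - k) : K) * (b : K)
                        * (a ^ k * a ^ (q - k)) := by push_cast; ring
                  _ = _ := by rw [haq]
              · -- k > q : coefficient vanishes
                have hcond : ¬ (b * k ≤ j ∧ b ∣ (j - b * k)) := by
                  rintro ⟨h1, -⟩
                  rw [hq] at h1
                  have := Nat.le_of_mul_le_mul_left h1 (by omega : 0 < b)
                  omega
                rw [if_neg hcond] at this
                rw [this, if_neg (by omega)]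
                simp
          -- the combinatorial sum, with the extra factor b
          have hnat : (∑ k ∈ range (m + 1), if 1 ≤ k ∧ k ≤ q then
              k * m.choose k * (b * q).choose (q - k) * b else 0)
              = m * (m - 1 + b * q).choose (q - 1) * b := by
            rw [← aux_nat_sum m q b hm hq1, Finset.sum_mul]
            exact Finset.sum_congr rfl fun k _ => by split <;> simp
          have hsum : (j : K) * (∑ k ∈ range (m + 1),
              (m.choose k : K) * a ^ k * coeff j (y ^ (b * k)))
              = ((m * (m - 1 + b * q).choose (q - 1) * b : ℕ) : K) * a ^ q := by
            rw [Finset.mul_sum, Finset.sum_congr rfl hterm, ← Finset.sum_mul,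
              ← Nat.cast_sum, hnat]
          have hn1 : m - 1 + b * q = n - 1 := by omega
          rw [hn1] at hsum
          set s := ∑ k ∈ range (m + 1),
              (m.choose k : K) * a ^ k * coeff j (y ^ (b * k)) with hs
          have hjK : (j : K) ≠ 0 := Nat.cast_ne_zero.2 (by omega)
          have hchoose := aux_choose_mul n q (by omega) hq1
          have hchooseK : ((n.choose q : ℕ) : K) * (q : K)
              = (n : K) * (((n - 1).choose (q - 1) : ℕ) : K) := by
            exact_mod_cast congrArg (Nat.cast : ℕ → K) hchoose
          have hjbq : (j : K) = (b : K) * (q : K) := by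
            exact_mod_cast congrArg (Nat.cast : ℕ → K) hq
          apply mul_left_cancel₀ hjK
          have e1 : (j : K) * ((n : K) * s) = (n : K) * ((j : K) * s) := by ring
          rw [e1, hsum, hjbq]
          push_cast
          linear_combination (-((m : K) * (b : K) * a ^ q)) * hchooseK
        · -- b does not divide n - m : coefficient vanishes
          rw [if_neg (by tauto)]
          apply Finset.sum_eq_zero
          intro k hk
          rcases Nat.eq_zero_or_pos k with rfl | hk1
          · simp [coeff_one, Nat.one_le_iff_ne_zero.1 hj1]
          · have hbk : 1 ≤ b * k := Nat.one_le_iff_ne_zero.2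
              (Nat.mul_ne_zero (by omega) (by omega))
            have := IH j hjlt (b * k) hbk hj1
            have hcond : ¬ (b * k ≤ j ∧ b ∣ (j - b * k)) := by
              rintro ⟨h1, h2⟩
              apply hd
              have : j = (j - b * k) + b * k := by omega
              rw [this]
              exact Nat.dvd_add h2 ⟨k, rfl⟩
            rw [if_neg hcond] at this
            rw [this, mul_zero]
    · -- n < m : coefficient vanishes since X^m divides y^m
      rw [if_neg (by tauto)]
      have hdvd : (X : PowerSeries K) ^ m ∣ y ^ m := pow_dvd_pow_of_dvd ⟨_, hy⟩ m
      exact (X_pow_dvd_iff.1 hdvd) n (by omega)
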